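/- arXiv:2505.22529 — 2 statements merged into one kernel-verified Lean document; each statement's English description precedes it below -/
import Mathlib

section
/- For any F ∈ ℝ^N with 0 < F_i < 1/α for all i, equality ⟨log(F/Ψ_α(F)), Q^α(F)⟩ = 0 holds if and only if (F_i/Ψ_α(F_i))·(F_j/Ψ_α(F_j)) = (F_k/Ψ_α(F_k))·(F_l/Ψ_α(F_l)) for all indices i,j,k,l ∈ {1,…,N} with Γ_{ij}^{kl} ≠ 0. -/
open Real Finset Filter Set

noncomputable def Psi (α y : ℝ) : ℝ :=
  (1 - α * y) ^ α * (1 + (1 - α) * y) ^ (1 - α)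

noncomputable def Qop {N : ℕ} (α : ℝ) (Γ : Fin N → Fin N → Fin N → Fin N → ℝ)
    (F : Fin N → ℝ) : Fin N → ℝ := fun i =>
  ∑ j, ∑ k, ∑ l, Γ i j k l *
    (F k * F l * Psi α (F i) * Psi α (F j) - F i * F j * Psi α (F k) * Psi α (F l))

def dotN {N : ℕ} (u v : Fin N → ℝ) : ℝ := ∑ i, u i * v i

def GammaOK {N d : ℕ} (p : Fin N → Fin d → ℝ)
    (Γ : Fin N → Fin N → Fin N → Fin N → ℝ) : Prop :=
  (∀ i j k l, 0 ≤ Γ i j k l) ∧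
  (∀ i j k l, Γ i j k l = Γ j i k l) ∧
  (∀ i j k l, Γ i j k l = Γ k l i j) ∧
  (∀ i j k l, Γ i j k l ≠ 0 →
    (∀ m, p i m + p j m = p k m + p l m) ∧
    (∑ m, (p i m) ^ 2) + (∑ m, (p j m) ^ 2) = (∑ m, (p k m) ^ 2) + (∑ m, (p l m) ^ 2))

def IsCollInv {N : ℕ} (Γ : Fin N → Fin N → Fin N → Fin N → ℝ) (φ : Fin N → ℝ) : Prop :=
  ∀ i j k l, Γ i j k l ≠ 0 → φ i + φ j = φ k + φ l

def IsNormal {N d : ℕ} (p : Fin N → Fin d → ℝ)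
    (Γ : Fin N → Fin N → Fin N → Fin N → ℝ) : Prop :=
  ∀ φ : Fin N → ℝ, IsCollInv Γ φ →
    ∃ (a c : ℝ) (b : Fin d → ℝ), ∀ i, φ i = a + (∑ m, b m * p i m) + c * ∑ m, (p i m) ^ 2

def IsEquilib {N d : ℕ} (α : ℝ) (p : Fin N → Fin d → ℝ) (P : Fin N → ℝ) : Prop :=
  (∀ i, 0 < P i ∧ P i < 1 / α) ∧
  ∃ (K : ℝ) (b : Fin d → ℝ) (c : ℝ), 0 < K ∧
    ∀ i, P i / Psi α (P i) = K * Real.exp (-(∑ m, b m * p i m) - c * ∑ m, (p i m) ^ 2)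

noncomputable def muF (α y : ℝ) : ℝ :=
  y * Real.log y + (1 - α * y) * Real.log (1 - α * y)
    - (1 + (1 - α) * y) * Real.log (1 + (1 - α) * y)

noncomputable def Rfun {N : ℕ} (α : ℝ) (P : Fin N → ℝ) (i : Fin N) : ℝ :=
  P i * (1 - α * P i) * (1 + (1 - α) * P i)

noncomputable def Pcoef {N : ℕ} (α : ℝ) (P : Fin N → ℝ) (i j k l : Fin N) : ℝ :=
  P i * P j * Psi α (P k) * Psi α (P l) / Real.sqrt (Rfun α P i)

noncomputable def Lop {N : ℕ} (α : ℝ) (Γ : Fin N → Fin N → Fin N → Fin N → ℝ)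
    (P : Fin N → ℝ) (f : Fin N → ℝ) : Fin N → ℝ := fun i =>
  ∑ j, ∑ k, ∑ l, Γ i j k l / Real.sqrt (Rfun α P i) *
    (Pcoef α P i j k l * f i + Pcoef α P j i k l * f j
      - Pcoef α P k l i j * f k - Pcoef α P l k i j * f l)


lemma sum4_swap12' {N : ℕ} (f : Fin N → Fin N → Fin N → Fin N → ℝ) :
    ∑ i, ∑ j, ∑ k, ∑ l, f i j k l = ∑ i, ∑ j, ∑ k, ∑ l, f j i k l :=
  Finset.sum_comm

lemma sum4_swap_pairs' {N : ℕ} (f : Fin N → Fin N → Fin N → Fin N → ℝ) :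
    ∑ i, ∑ j, ∑ k, ∑ l, f i j k l = ∑ i, ∑ j, ∑ k, ∑ l, f k l i j := by
  have h1 : ∀ g : Fin N → Fin N → Fin N → ℝ, ∑ j : Fin N, ∑ k : Fin N, ∑ l : Fin N, g j k l
      = ∑ k : Fin N, ∑ j : Fin N, ∑ l : Fin N, g j k l := fun g => Finset.sum_comm
  calc ∑ i, ∑ j, ∑ k, ∑ l, f i j k l
      = ∑ i, ∑ k, ∑ j, ∑ l, f i j k l := Finset.sum_congr rfl fun i _ => h1 _
    _ = ∑ k, ∑ i, ∑ j, ∑ l, f i j k l := Finset.sum_comm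
    _ = ∑ k, ∑ i, ∑ l, ∑ j, f i j k l := Finset.sum_congr rfl fun k _ =>
          Finset.sum_congr rfl fun i _ => Finset.sum_comm
    _ = ∑ k, ∑ l, ∑ i, ∑ j, f i j k l := Finset.sum_congr rfl fun k _ => Finset.sum_comm

lemma log_ineq' {x y : ℝ} (hx : 0 < x) (hy : 0 < y) :
    0 ≤ (x - y) * (Real.log x - Real.log y) := by
  rcases lt_trichotomy x y with h|h|h
  · have := Real.log_lt_log hx h; nlinarith
  · simp [h]
  · have := Real.log_lt_log hy h; nlinarith

lemma log_ineq_eq' {x y : ℝ} (hx : 0 < x) (hy : 0 < y)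
    (h : (x - y) * (Real.log x - Real.log y) = 0) : x = y := by
  rcases lt_trichotomy x y with h'|h'|h'
  · have := Real.log_lt_log hx h'; nlinarith
  · exact h'
  · have := Real.log_lt_log hy h'; nlinarith

lemma sum4_eq_zero_iff' {N : ℕ} (f : Fin N → Fin N → Fin N → Fin N → ℝ)
    (hf : ∀ i j k l, 0 ≤ f i j k l) :
    (∑ i, ∑ j, ∑ k, ∑ l, f i j k l) = 0 ↔ ∀ i j k l, f i j k l = 0 := by
  constructor
  · intro h i j k l
    have h1 := (Finset.sum_eq_zero_iff_of_nonneg (fun i _ => Finset.sum_nonneg fun j _ =>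
      Finset.sum_nonneg fun k _ => Finset.sum_nonneg fun l _ => hf i j k l)).mp h i (Finset.mem_univ i)
    have h2 := (Finset.sum_eq_zero_iff_of_nonneg (fun j _ => Finset.sum_nonneg fun k _ =>
      Finset.sum_nonneg fun l _ => hf i j k l)).mp h1 j (Finset.mem_univ j)
    have h3 := (Finset.sum_eq_zero_iff_of_nonneg (fun k _ =>
      Finset.sum_nonneg fun l _ => hf i j k l)).mp h2 k (Finset.mem_univ k)
    exact (Finset.sum_eq_zero_iff_of_nonneg (fun l _ => hf i j k l)).mp h3 l (Finset.mem_univ l)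
  · intro h; simp [h]

lemma main_aux' {N : ℕ} (Γ : Fin N → Fin N → Fin N → Fin N → ℝ)
    (hΓ0 : ∀ i j k l, 0 ≤ Γ i j k l) (hΓ12 : ∀ i j k l, Γ i j k l = Γ j i k l)
    (hΓp : ∀ i j k l, Γ i j k l = Γ k l i j)
    (g Ψ : Fin N → ℝ) (hΨ : ∀ i, 0 < Ψ i) (hg : ∀ i, 0 < g i) :
    (∑ i, Real.log (g i) * ∑ j, ∑ k, ∑ l, Γ i j k l *
        (Ψ i * Ψ j * Ψ k * Ψ l * (g k * g l - g i * g j))) = 0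
      ↔ ∀ i j k l, Γ i j k l ≠ 0 → g i * g j = g k * g l := by
  set E : Fin N → Fin N → Fin N → Fin N → ℝ := fun i j k l =>
    Γ i j k l * (Ψ i * Ψ j * Ψ k * Ψ l * (g k * g l - g i * g j)) with hE
  have hE12 : ∀ i j k l, E i j k l = E j i k l := by
    intro i j k l; simp only [hE]; rw [hΓ12 i j k l]; ring
  have hEanti : ∀ i j k l, E i j k l = - E k l i j := by
    intro i j k l; simp only [hE]; rw [hΓp i j k l]; ring
  have hLHS : (∑ i, Real.log (g i) * ∑ j, ∑ k, ∑ l, Γ i j k l *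
      (Ψ i * Ψ j * Ψ k * Ψ l * (g k * g l - g i * g j)))
      = ∑ i, ∑ j, ∑ k, ∑ l, Real.log (g i) * E i j k l := by
    simp only [hE, Finset.mul_sum]
  set D : ℝ := ∑ i, ∑ j, ∑ k, ∑ l, Real.log (g i) * E i j k l with hD
  have h2 : D = ∑ i, ∑ j, ∑ k, ∑ l, Real.log (g j) * E i j k l := by
    rw [hD, sum4_swap12' (fun i j k l => Real.log (g i) * E i j k l)]
    exact Finset.sum_congr rfl fun i _ => Finset.sum_congr rfl fun j _ =>
      Finset.sum_congr rfl fun k _ => Finset.sum_congr rfl fun l _ => by rw [hE12 j i k l]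
  have h3 : ∑ i, ∑ j, ∑ k, ∑ l, (Real.log (g i) + Real.log (g j)) * E i j k l = D + D := by
    simp only [add_mul, Finset.sum_add_distrib]
    rw [← hD, ← h2]
  have h4 : ∑ i, ∑ j, ∑ k, ∑ l, (Real.log (g i) + Real.log (g j)) * E i j k l
      = - ∑ i, ∑ j, ∑ k, ∑ l, (Real.log (g k) + Real.log (g l)) * E i j k l := by
    rw [sum4_swap_pairs' (fun i j k l => (Real.log (g i) + Real.log (g j)) * E i j k l)]
    have : ∀ i j k l : Fin N, (Real.log (g k) + Real.log (g l)) * E k l i j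
        = - ((Real.log (g k) + Real.log (g l)) * E i j k l) := by
      intro i j k l; rw [hEanti k l i j]; ring
    simp only [this, Finset.sum_neg_distrib]
  have h5 : ∑ i, ∑ j, ∑ k, ∑ l,
      ((Real.log (g i) + Real.log (g j)) - (Real.log (g k) + Real.log (g l))) * E i j k l
      = 4 * D := by
    simp only [sub_mul, Finset.sum_sub_distrib]
    have := h3; have := h4; linarith [h3, h4]
  set T : Fin N → Fin N → Fin N → Fin N → ℝ := fun i j k l =>
    Γ i j k l * ((Ψ i * Ψ j * Ψ k * Ψ l) *
      ((g i * g j - g k * g l) * (Real.log (g i * g j) - Real.log (g k * g l)))) with hT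
  have hTE : ∀ i j k l, ((Real.log (g i) + Real.log (g j))
      - (Real.log (g k) + Real.log (g l))) * E i j k l = - T i j k l := by
    intro i j k l
    simp only [hT, hE]
    rw [Real.log_mul (hg i).ne' (hg j).ne', Real.log_mul (hg k).ne' (hg l).ne']
    ring
  have hsumT : ∑ i, ∑ j, ∑ k, ∑ l, T i j k l = -(4 * D) := by
    rw [← h5]
    simp only [hTE, Finset.sum_neg_distrib, neg_neg]
  have hTnn : ∀ i j k l, 0 ≤ T i j k l := by
    intro i j k l
    refine mul_nonneg (hΓ0 i j k l) (mul_nonneg ?_ ?_)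
    · exact mul_nonneg (mul_nonneg (mul_nonneg (hΨ i).le (hΨ j).le) (hΨ k).le) (hΨ l).le
    · exact log_ineq' (mul_pos (hg i) (hg j)) (mul_pos (hg k) (hg l))
  rw [hLHS]
  constructor
  · intro h0 i j k l hΓne
    have hT0 : T i j k l = 0 := by
      refine (sum4_eq_zero_iff' T hTnn).mp ?_ i j k l
      rw [hsumT, h0]; ring
    have hΓpos : 0 < Γ i j k l := lt_of_le_of_ne (hΓ0 i j k l) (Ne.symm hΓne)
    have hΨp : (0:ℝ) < Ψ i * Ψ j * Ψ k * Ψ l := mul_pos (mul_pos (mul_pos (hΨ i) (hΨ j)) (hΨ k)) (hΨ l)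
    have : (g i * g j - g k * g l) * (Real.log (g i * g j) - Real.log (g k * g l)) = 0 := by
      by_contra hne
      have := mul_ne_zero hΓpos.ne' (mul_ne_zero hΨp.ne' hne)
      rw [← mul_assoc] at this
      exact this (by rw [← hT0]; simp only [hT]; ring)
    exact log_ineq_eq' (mul_pos (hg i) (hg j)) (mul_pos (hg k) (hg l)) this
  · intro h
    refine Finset.sum_eq_zero fun i _ => Finset.sum_eq_zero fun j _ =>
      Finset.sum_eq_zero fun k _ => Finset.sum_eq_zero fun l _ => ?_
    simp only [hE]
    by_cases hΓne : Γ i j k l = 0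
    · rw [hΓne]; ring
    · rw [h i j k l hΓne]; ring

/-- vanishing entropy dissipation iff the detailed-balance relations hold. -/
theorem stmt2 {N d : ℕ} (hN : 0 < N) (hd : 0 < d)
    (α : ℝ) (hα0 : 0 < α) (hα1 : α < 1)
    (p : Fin N → Fin d → ℝ) (Γ : Fin N → Fin N → Fin N → Fin N → ℝ)
    (hΓ : GammaOK p Γ)
    (F : Fin N → ℝ) (hF : ∀ i, 0 < F i ∧ F i < 1 / α) :
    dotN (fun i => Real.log (F i / Psi α (F i))) (Qop α Γ F) = 0 ↔
      ∀ i j k l, Γ i j k l ≠ 0 →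
        (F i / Psi α (F i)) * (F j / Psi α (F j))
          = (F k / Psi α (F k)) * (F l / Psi α (F l)) := by
  obtain ⟨hΓ0, hΓ12, hΓp, -⟩ := hΓ
  have hΨpos : ∀ i, 0 < Psi α (F i) := by
    intro i
    have h1 : 0 < 1 - α * F i := by
      have h := (hF i).2
      rw [lt_div_iff₀ hα0] at h
      linarith
    have h2 : 0 < 1 + (1 - α) * F i := by nlinarith [(hF i).1]
    exact mul_pos (Real.rpow_pos_of_pos h1 _) (Real.rpow_pos_of_pos h2 _)
  have hgpos : ∀ i, 0 < F i / Psi α (F i) := fun i => div_pos (hF i).1 (hΨpos i)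
  have hconv : dotN (fun i => Real.log (F i / Psi α (F i))) (Qop α Γ F)
      = ∑ i, Real.log ((fun i => F i / Psi α (F i)) i) * ∑ j, ∑ k, ∑ l, Γ i j k l *
        ((fun i => Psi α (F i)) i * (fun i => Psi α (F i)) j * (fun i => Psi α (F i)) k
            * (fun i => Psi α (F i)) l *
          ((fun i => F i / Psi α (F i)) k * (fun i => F i / Psi α (F i)) l
            - (fun i => F i / Psi α (F i)) i * (fun i => F i / Psi α (F i)) j)) := by
    unfold dotN Qop
    refine Finset.sum_congr rfl fun i _ => ?_
    congr 1
    refine Finset.sum_congr rfl fun j _ => Finset.sum_congr rfl fun k _ =>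
      Finset.sum_congr rfl fun l _ => ?_
    simp only
    have hi := (hΨpos i).ne'
    have hj := (hΨpos j).ne'
    have hk := (hΨpos k).ne'
    have hl := (hΨpos l).ne'
    congr 1
    field_simp
  rw [hconv]
  exact main_aux' Γ hΓ0 hΓ12 hΓp (fun i => F i / Psi α (F i)) (fun i => Psi α (F i))
    hΨpos hgpos
end

section
/- (Uniqueness of the equilibrium distribution with given moments.) Let P and P̃ be equilibrium distributions such that ⟨1,P⟩ = ⟨1,P̃⟩, ⟨p^i,P⟩ = ⟨p^i,P̃⟩ for i = 1,…,d, and ⟨|p|²,P⟩ = ⟨|p|²,P̃⟩. Then P = P̃. -/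
open Real Finset Filter Set

noncomputable def hfun (α y : ℝ) : ℝ :=
  Real.log y - α * Real.log (1 - α * y) - (1 - α) * Real.log (1 + (1 - α) * y)

lemma hfun_hasDerivAt {α : ℝ} (hα0 : 0 < α) (hα1 : α < 1) {y : ℝ}
    (hy : y ∈ Set.Ioo 0 (1 / α)) :
    HasDerivAt (hfun α)
      (y⁻¹ + α * (α / (1 - α * y)) - (1 - α) * ((1 - α) / (1 + (1 - α) * y))) y := by
  obtain ⟨hy0, hy2⟩ := hy
  have h1 : 0 < 1 - α * y := by
    have : y * α < 1 := (lt_div_iff₀ hα0).mp hy2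
    nlinarith
  have h2 : 0 < 1 + (1 - α) * y := by nlinarith
  have dlog : HasDerivAt Real.log y⁻¹ y := Real.hasDerivAt_log hy0.ne'
  have da : HasDerivAt (fun y : ℝ => 1 - α * y) (-α) y := by
    simpa using ((hasDerivAt_id y).const_mul α).const_sub (1:ℝ)
  have db : HasDerivAt (fun y : ℝ => 1 + (1 - α) * y) (1 - α) y := by
    simpa using ((hasDerivAt_id y).const_mul (1 - α)).const_add (1:ℝ)
  have dla : HasDerivAt (fun y : ℝ => Real.log (1 - α * y)) (-α / (1 - α * y)) y :=
    da.log h1.ne'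
  have dlb : HasDerivAt (fun y : ℝ => Real.log (1 + (1 - α) * y))
      ((1 - α) / (1 + (1 - α) * y)) y := db.log h2.ne'
  have := (dlog.sub (dla.const_mul α)).sub (dlb.const_mul (1 - α))
  exact this.congr_deriv (by ring)

lemma hfun_strictMonoOn {α : ℝ} (hα0 : 0 < α) (hα1 : α < 1) :
    StrictMonoOn (hfun α) (Set.Ioo 0 (1 / α)) := by
  apply strictMonoOn_of_deriv_pos (convex_Ioo _ _)
  · intro y hy
    exact (hfun_hasDerivAt hα0 hα1 hy).continuousAt.continuousWithinAt
  · intro y hy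
    rw [interior_Ioo] at hy
    rw [(hfun_hasDerivAt hα0 hα1 hy).deriv]
    obtain ⟨hy0, hy2⟩ := hy
    have h1 : 0 < 1 - α * y := by
      have : y * α < 1 := (lt_div_iff₀ hα0).mp hy2
      nlinarith
    have h2 : 0 < 1 + (1 - α) * y := by nlinarith
    have t2 : 0 ≤ α * (α / (1 - α * y)) := by positivity
    have t3 : (1 - α) * ((1 - α) / (1 + (1 - α) * y)) < y⁻¹ := by
      have h5 : (1 - α) * ((1 - α) / (1 + (1 - α) * y)) = (1 - α) ^ 2 / (1 + (1 - α) * y) := by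
        ring
      rw [h5, inv_eq_one_div, div_lt_div_iff₀ h2 hy0]
      nlinarith [mul_pos hα0 (mul_pos (by linarith : (0:ℝ) < 1 - α) hy0)]
    linarith

lemma log_div_Psi {α : ℝ} (hα0 : 0 < α) (hα1 : α < 1) {y : ℝ}
    (hy : y ∈ Set.Ioo 0 (1 / α)) :
    Real.log (y / Psi α y) = hfun α y := by
  obtain ⟨hy0, hy2⟩ := hy
  have h1 : 0 < 1 - α * y := by
    have : y * α < 1 := (lt_div_iff₀ hα0).mp hy2
    nlinarith
  have h2 : 0 < 1 + (1 - α) * y := by nlinarith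
  have hr1 : (0:ℝ) < (1 - α * y) ^ α := Real.rpow_pos_of_pos h1 α
  have hr2 : (0:ℝ) < (1 + (1 - α) * y) ^ (1 - α) := Real.rpow_pos_of_pos h2 (1 - α)
  unfold Psi hfun
  rw [Real.log_div hy0.ne' (by positivity), Real.log_mul hr1.ne' hr2.ne',
      Real.log_rpow h1, Real.log_rpow h2]
  ring

lemma mono_prod_nonneg {f : ℝ → ℝ} {s : Set ℝ} (hf : StrictMonoOn f s)
    {x y : ℝ} (hx : x ∈ s) (hy : y ∈ s) : 0 ≤ (x - y) * (f x - f y) := by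
  rcases lt_trichotomy x y with h | h | h
  · have := hf hx hy h
    nlinarith
  · simp [h]
  · have := hf hy hx h
    nlinarith

lemma mono_prod_eq_zero {f : ℝ → ℝ} {s : Set ℝ} (hf : StrictMonoOn f s)
    {x y : ℝ} (hx : x ∈ s) (hy : y ∈ s) (h : (x - y) * (f x - f y) = 0) : x = y := by
  rcases lt_trichotomy x y with h' | h' | h'
  · have := hf hx hy h'
    nlinarith
  · exact h'
  · have := hf hy hx h'
    nlinarith

/-- Lemma 1: uniqueness of the equilibrium distribution with given
moments. -/
theorem stmt12 {N d : ℕ} (hN : 0 < N) (hd : 0 < d)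
    (α : ℝ) (hα0 : 0 < α) (hα1 : α < 1)
    (p : Fin N → Fin d → ℝ)
    (P P' : Fin N → ℝ) (hP : IsEquilib α p P) (hP' : IsEquilib α p P')
    (h1 : dotN (fun _ => 1) P = dotN (fun _ => 1) P')
    (h2 : ∀ m : Fin d, dotN (fun i => p i m) P = dotN (fun i => p i m) P')
    (h3 : dotN (fun i => ∑ m, (p i m) ^ 2) P = dotN (fun i => ∑ m, (p i m) ^ 2) P') :
    P = P' := by
  obtain ⟨hPc, K, b, c, hK, hEq⟩ := hP
  obtain ⟨hPc', K', b', c', hK', hEq'⟩ := hP'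
  have hmem : ∀ i, P i ∈ Set.Ioo 0 (1 / α) := fun i => ⟨(hPc i).1, (hPc i).2⟩
  have hmem' : ∀ i, P' i ∈ Set.Ioo 0 (1 / α) := fun i => ⟨(hPc' i).1, (hPc' i).2⟩
  have hlog : ∀ i, hfun α (P i)
      = Real.log K - (∑ m, b m * p i m) - c * ∑ m, (p i m) ^ 2 := by
    intro i
    have h := congrArg Real.log (hEq i)
    rw [log_div_Psi hα0 hα1 (hmem i), Real.log_mul hK.ne' (Real.exp_ne_zero _),
        Real.log_exp] at h
    linarith [h]
  have hlog' : ∀ i, hfun α (P' i)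
      = Real.log K' - (∑ m, b' m * p i m) - c' * ∑ m, (p i m) ^ 2 := by
    intro i
    have h := congrArg Real.log (hEq' i)
    rw [log_div_Psi hα0 hα1 (hmem' i), Real.log_mul hK'.ne' (Real.exp_ne_zero _),
        Real.log_exp] at h
    linarith [h]
  have e1 : ∑ i, (P i - P' i) = 0 := by
    have h : ∑ i, P i = ∑ i, P' i := by simpa [dotN] using h1
    rw [Finset.sum_sub_distrib, h, sub_self]
  have e2 : ∀ m, ∑ i, p i m * (P i - P' i) = 0 := by
    intro m
    have h : ∑ i, p i m * P i = ∑ i, p i m * P' i := h2 m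
    simp only [mul_sub]
    rw [Finset.sum_sub_distrib, h, sub_self]
  have e3 : ∑ i, (∑ m, (p i m) ^ 2) * (P i - P' i) = 0 := by
    have h : ∑ i, (∑ m, (p i m) ^ 2) * P i = ∑ i, (∑ m, (p i m) ^ 2) * P' i := h3
    simp only [mul_sub]
    rw [Finset.sum_sub_distrib, h, sub_self]
  have hφ : ∀ i, hfun α (P i) - hfun α (P' i)
      = (Real.log K - Real.log K') + (∑ m, (b' m - b m) * p i m)
        + (c' - c) * ∑ m, (p i m) ^ 2 := by
    intro i
    rw [hlog i, hlog' i,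
        show (∑ m, (b' m - b m) * p i m)
          = (∑ m, b' m * p i m) - ∑ m, b m * p i m by
          rw [← Finset.sum_sub_distrib]; exact Finset.sum_congr rfl fun m _ => by ring]
    ring
  have key : ∑ i, (P i - P' i) * (hfun α (P i) - hfun α (P' i)) = 0 := by
    have step : ∀ i, (P i - P' i) * (hfun α (P i) - hfun α (P' i))
        = (Real.log K - Real.log K') * (P i - P' i)
          + (∑ m, (b' m - b m) * (p i m * (P i - P' i)))
          + (c' - c) * ((∑ m, (p i m) ^ 2) * (P i - P' i)) := by
      intro i
      rw [hφ i]
      have : (P i - P' i) * (∑ m, (b' m - b m) * p i m)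
          = ∑ m, (b' m - b m) * (p i m * (P i - P' i)) := by
        rw [Finset.mul_sum]; exact Finset.sum_congr rfl fun m _ => by ring
      rw [mul_add, mul_add, this]
      ring
    rw [Finset.sum_congr rfl fun i _ => step i]
    have t1 : ∑ i, (Real.log K - Real.log K') * (P i - P' i) = 0 := by
      rw [← Finset.mul_sum, e1, mul_zero]
    have t2 : ∑ i : Fin N, ∑ m, (b' m - b m) * (p i m * (P i - P' i)) = 0 := by
      rw [Finset.sum_comm]
      exact Finset.sum_eq_zero fun m _ => by rw [← Finset.mul_sum, e2 m, mul_zero]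
    have t3 : ∑ i, (c' - c) * ((∑ m, (p i m) ^ 2) * (P i - P' i)) = 0 := by
      rw [← Finset.mul_sum, e3, mul_zero]
    rw [Finset.sum_add_distrib, Finset.sum_add_distrib, t1, t2, t3]
    ring
  have hsm := hfun_strictMonoOn hα0 hα1
  have hnn : ∀ i ∈ Finset.univ, (0:ℝ) ≤ (P i - P' i) * (hfun α (P i) - hfun α (P' i)) :=
    fun i _ => mono_prod_nonneg hsm (hmem i) (hmem' i)
  have hzero := (Finset.sum_eq_zero_iff_of_nonneg hnn).mp key
  funext i
  exact mono_prod_eq_zero hsm (hmem i) (hmem' i) (hzero i (Finset.mem_univ i))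
end
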